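/- Let g be a Lie algebra with ad-invariant nondegenerate symmetric bilinear form, S a 2-dimensional nondegenerate subspace with S^⊥ a Lie subalgebra, and η ∈ S^⊥. Then the operator K : S → S, K(v) = ¼[η,[η,v]], is a scalar multiple of the identity; in particular K commutes with every endomorphism of S. -/

import Mathlib

open LinearMap (BilinForm)

/-- In a Lie algebra with ad-invariant nondegenerate symmetric bilinear
form, if `S` is a 2-dimensional nondegenerate subspace with `S^⊥` a Lie subalgebra, and
`η ∈ S^⊥`, then the operator `K(v) = ¼⁅η,⁅η,v⁆⁆` on `S` is a scalar multiple of the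
identity; in particular it commutes with every endomorphism of `S`. -/
theorem stmt13 (g : Type*) [LieRing g] [LieAlgebra ℝ g] [Module.Finite ℝ g]
    (B : BilinForm ℝ g) (hBnd : B.Nondegenerate)
    (hBsymm : ∀ x y : g, B x y = B y x)
    (hBinv : ∀ x y z : g, B ⁅x, y⁆ z = B x ⁅y, z⁆)
    (S : Submodule ℝ g) (hSnd : (B.restrict S).Nondegenerate)
    (hSdim : Module.finrank ℝ S = 2)
    (hclosed : ∀ x ∈ B.orthogonal S, ∀ y ∈ B.orthogonal S, ⁅x, y⁆ ∈ B.orthogonal S)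
    (η : g) (hη : η ∈ B.orthogonal S) :
    ∃ c : ℝ, (∀ v ∈ S, (1 / 4 : ℝ) • ⁅η, ⁅η, v⁆⁆ = c • v) ∧
      ∀ A : Module.End ℝ g, (∀ v ∈ S, A v ∈ S) →
        ∀ v ∈ S, A ((1 / 4 : ℝ) • ⁅η, ⁅η, v⁆⁆) = (1 / 4 : ℝ) • ⁅η, ⁅η, A v⁆⁆ := by
  classical
  have hrefl : B.IsRefl := fun x y h => by rw [hBsymm]; exact h
  -- skew-adjointness of ad
  have hadj : ∀ a b c : g, B ⁅a, b⁆ c = - B b ⁅a, c⁆ := by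
    intro a b c
    have e : (⁅a, b⁆ : g) = -⁅b, a⁆ := by rw [← lie_skew]
    rw [e, map_neg, LinearMap.neg_apply, hBinv]
  -- ad η maps S into S
  have key : ∀ v ∈ S, ⁅η, v⁆ ∈ S := by
    intro v hv
    rw [← LinearMap.BilinForm.orthogonal_orthogonal hBnd hrefl S,
      LinearMap.BilinForm.mem_orthogonal_iff]
    intro x hx
    have hx' : ⁅η, x⁆ ∈ B.orthogonal S := hclosed η hη x hx
    show B x ⁅η, v⁆ = 0
    rw [hBsymm x, hadj η v x, hx' v hv, neg_zero]
  have key' : ∀ v : S, ⁅η, (v : g)⁆ ∈ S := fun v => key v v.2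
  -- the skew-adjoint operator f = ad η restricted to S
  set f : S →ₗ[ℝ] S :=
    { toFun := fun v => ⟨⁅η, (v : g)⁆, key' v⟩
      map_add' := fun a b => by ext; simp
      map_smul' := fun c a => by ext; simp } with hf
  have hfapp : ∀ v : S, ((f v : S) : g) = ⁅η, (v : g)⁆ := fun v => rfl
  have hskew : ∀ v w : S, B ((f v : S) : g) w = - B (v : g) ((f w : S) : g) := by
    intro v w
    rw [hfapp, hfapp, hadj]
  -- orthogonal basis of S
  have hsymm' : (B.restrict S).IsSymm := ⟨fun x y => by
    simp only [LinearMap.BilinForm.restrict_apply]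
    exact hBsymm _ _⟩
  obtain ⟨bS0, hb0⟩ := LinearMap.BilinForm.exists_orthogonal_basis (LinearMap.BilinForm.isSymm_iff.mp hsymm')
  set b : Module.Basis (Fin 2) ℝ S := bS0.reindex (finCongr hSdim) with hbdef
  have hborth : ∀ i j : Fin 2, i ≠ j → B ((b i : S) : g) (b j) = 0 := by
    intro i j hij
    have hne : (finCongr hSdim).symm i ≠ (finCongr hSdim).symm j := by
      intro h'
      exact hij (by simpa using congrArg (finCongr hSdim) h')
    have h := hb0 hne
    simpa [hbdef, Module.Basis.reindex_apply, LinearMap.BilinForm.restrict_apply,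
      LinearMap.IsOrtho, Function.onFun] using h
  have hbne : ∀ i : Fin 2, B ((b i : S) : g) (b i) ≠ 0 := by
    intro i
    have := LinearMap.BilinForm.iIsOrtho.not_isOrtho_basis_self_of_nondegenerate
      hb0 hSnd ((finCongr hSdim).symm i)
    simpa [hbdef, Module.Basis.reindex_apply, LinearMap.BilinForm.restrict_apply,
      LinearMap.isOrtho_def] using this
  -- diagonal entries of f vanish
  have hdiag : ∀ i : Fin 2, b.repr (f (b i)) i = 0 := by
    intro i
    have hself : B ((f (b i) : S) : g) (b i) = 0 := by
      have h1 := hskew (b i) (b i)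
      have h2 : B ((b i : S) : g) (f (b i)) = B ((f (b i) : S) : g) (b i) := hBsymm _ _
      rw [h2] at h1
      linarith
    have hexp : ((f (b i) : S) : g) = ∑ j : Fin 2, b.repr (f (b i)) j • ((b j : S) : g) := by
      have h := congrArg (Submodule.subtype S) (b.sum_repr (f (b i))).symm
      simp only [map_sum, map_smul, Submodule.coe_subtype] at h
      exact h
    have hBexp : B ((f (b i) : S) : g) (b i) =
        b.repr (f (b i)) i * B ((b i : S) : g) (b i) := by
      conv_lhs => rw [hexp]
      rw [map_sum, LinearMap.sum_apply]
      rw [Finset.sum_eq_single i]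
      · rw [map_smul, LinearMap.smul_apply, smul_eq_mul]
      · intro j _ hj
        rw [map_smul, LinearMap.smul_apply, smul_eq_mul, hborth j i hj, mul_zero]
      · intro h; exact absurd (Finset.mem_univ i) h
    rw [hBexp] at hself
    rcases mul_eq_zero.1 hself with h | h
    · exact h
    · exact absurd h (hbne i)
  -- components
  set β := b.repr (f (b 0)) 1 with hβ
  set γ := b.repr (f (b 1)) 0 with hγ
  have hf0 : f (b 0) = β • b 1 := by
    have := b.sum_repr (f (b 0))
    rw [Fin.sum_univ_two, hdiag 0, zero_smul, zero_add] at this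
    exact this.symm
  have hf1 : f (b 1) = γ • b 0 := by
    have := b.sum_repr (f (b 1))
    rw [Fin.sum_univ_two, hdiag 1, zero_smul, add_zero] at this
    exact this.symm
  have hffb0 : f (f (b 0)) = (β * γ) • b 0 := by
    rw [hf0, map_smul, hf1, smul_smul]
  have hffb1 : f (f (b 1)) = (β * γ) • b 1 := by
    rw [hf1, map_smul, hf0, smul_smul, mul_comm]
  have hexpv : ∀ v : S, v = b.repr v 0 • b 0 + b.repr v 1 • b 1 := by
    intro v
    have := b.sum_repr v
    rw [Fin.sum_univ_two] at this
    exact this.symm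
  have hff : ∀ v : S, f (f v) = (β * γ) • v := by
    intro v
    conv_lhs => rw [hexpv v]
    rw [map_add, map_smul, map_smul, map_add, map_smul, map_smul, hffb0, hffb1,
      smul_comm (b.repr v 0) (β * γ), smul_comm (b.repr v 1) (β * γ),
      ← smul_add, ← hexpv v]
  have main : ∀ v (hv : v ∈ S), (1 / 4 : ℝ) • ⁅η, ⁅η, v⁆⁆ = ((1 / 4 : ℝ) * (β * γ)) • v := by
    intro v hv
    have h := hff ⟨v, hv⟩
    have h' := congrArg (Submodule.subtype S) h
    simp only [map_smul, Submodule.coe_subtype] at h'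
    have hcoe : ((f (f ⟨v, hv⟩) : S) : g) = ⁅η, ⁅η, v⁆⁆ := rfl
    rw [hcoe] at h'
    rw [h', smul_smul]
  refine ⟨(1 / 4 : ℝ) * (β * γ), main, ?_⟩
  intro A hA v hv
  rw [main v hv, main (A v) (hA v hv), map_smul]
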